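/- Let Σ̂ be an n×n positive semidefinite symmetric matrix, ε ≥ 0, and let B = {Σ ⪰ 0 : G(Σ, Σ̂) ≤ ε} be the Gelbrich ball of radius ε around Σ̂. Then for every Σ ∈ B, ‖Σ‖_F ≤ (2λ_max(Σ̂)^{1/2} + ε)·ε + ‖Σ̂‖_F. -/

import Mathlib

open Matrix
open scoped RealInnerProductSpace

/-- Frobenius norm. -/
noncomputable def frobNorm {n : ℕ} (A : Matrix (Fin n) (Fin n) ℝ) : ℝ :=
  Real.sqrt ((Aᵀ * A).trace)

open scoped ComplexOrder in
/-- The positive semidefinite square root of a positive semidefinite matrix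
(the definition `Matrix.PosSemidef.sqrt` of the older Mathlib, since removed). -/
noncomputable def Matrix.PosSemidef.sqrt {m : Type*} {𝕜 : Type*} [Fintype m] [DecidableEq m]
    [RCLike 𝕜] {A : Matrix m m 𝕜} (hA : A.PosSemidef) : Matrix m m 𝕜 :=
  hA.1.eigenvectorUnitary.1 * diagonal ((↑) ∘ (Real.sqrt ∘ hA.1.eigenvalues)) *
  (star hA.1.eigenvectorUnitary : Matrix m m 𝕜)

open scoped ComplexOrder in
lemma Matrix.PosSemidef.posSemidef_sqrt {m : Type*} {𝕜 : Type*} [Fintype m] [DecidableEq m]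
    [RCLike 𝕜] {A : Matrix m m 𝕜} (hA : A.PosSemidef) : hA.sqrt.PosSemidef := by
  have hd : (0 : m → 𝕜) ≤ ((↑) ∘ (Real.sqrt ∘ hA.1.eigenvalues)) := fun i =>
    RCLike.ofReal_nonneg.mpr (Real.sqrt_nonneg _)
  have := (Matrix.PosSemidef.diagonal hd).mul_mul_conjTranspose_same
    (hA.1.eigenvectorUnitary : Matrix m m 𝕜)
  unfold Matrix.PosSemidef.sqrt
  rwa [← Matrix.star_eq_conjTranspose] at this

open scoped ComplexOrder in
lemma Matrix.PosSemidef.sqrt_mul_self {m : Type*} {𝕜 : Type*} [Fintype m] [DecidableEq m]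
    [RCLike 𝕜] {A : Matrix m m 𝕜} (hA : A.PosSemidef) : hA.sqrt * hA.sqrt = A := by
  have hU : (star hA.1.eigenvectorUnitary : Matrix m m 𝕜) * hA.1.eigenvectorUnitary = 1 :=
    Unitary.coe_star_mul_self _
  have hDD : diagonal (((↑) ∘ (Real.sqrt ∘ hA.1.eigenvalues)) : m → 𝕜) *
      diagonal ((↑) ∘ (Real.sqrt ∘ hA.1.eigenvalues)) =
      diagonal (RCLike.ofReal ∘ hA.1.eigenvalues) := by
    rw [diagonal_mul_diagonal]
    congr 1; funext i
    simp only [Function.comp_apply, ← RCLike.ofReal_mul,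
      Real.mul_self_sqrt (hA.eigenvalues_nonneg i)]
  unfold Matrix.PosSemidef.sqrt
  conv_rhs => rw [hA.1.spectral_theorem, Unitary.conjStarAlgAut_apply]
  rw [← hDD]
  simp only [Matrix.mul_assoc]
  rw [← Matrix.mul_assoc (star _ : Matrix m m 𝕜) _ _, hU, Matrix.one_mul]

namespace StmtAux

variable {n : ℕ}

attribute [local instance] Matrix.frobeniusNormedAddCommGroup Matrix.frobeniusNormedSpace

lemma le_of_sq_le_sq {a b : ℝ} (h : a ^ 2 ≤ b ^ 2) (hb : 0 ≤ b) : a ≤ b := by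
  nlinarith [sq_nonneg (a - b), sq_nonneg (a + b)]

lemma mulVec_dot_mulVec (A : Matrix (Fin n) (Fin n) ℝ) (x y : Fin n → ℝ) :
    (A *ᵥ x) ⬝ᵥ (A *ᵥ y) = x ⬝ᵥ ((Aᵀ * A) *ᵥ y) := by
  conv_rhs => rw [← Matrix.mulVec_mulVec, Matrix.dotProduct_mulVec, Matrix.vecMul_transpose]

lemma inner_eq_dot (x y : EuclideanSpace ℝ (Fin n)) :
    ⟪x, y⟫ = (x : Fin n → ℝ) ⬝ᵥ (y : Fin n → ℝ) := by
  simp [PiLp.inner_apply, dotProduct]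
  exact Finset.sum_congr rfl fun _ _ => mul_comm _ _

lemma norm_sq_eq_dot (x : EuclideanSpace ℝ (Fin n)) :
    ‖x‖ ^ 2 = (x : Fin n → ℝ) ⬝ᵥ (x : Fin n → ℝ) := by
  rw [← real_inner_self_eq_norm_sq]; exact inner_eq_dot x x

lemma quad_le (P : Matrix (Fin n) (Fin n) ℝ) (hP : P.IsHermitian)
    (v : EuclideanSpace ℝ (Fin n)) :
    ⟪Matrix.toEuclideanLin P v, v⟫ ≤ (⨆ i, hP.eigenvalues i) * ‖v‖ ^ 2 := by
  classical
  have hPt : Pᵀ = P := by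
    have := hP; rwa [Matrix.IsHermitian, conjTranspose_eq_transpose_of_trivial] at this
  set lam := ⨆ i, hP.eigenvalues i with hlam
  have hbdd : BddAbove (Set.range hP.eigenvalues) := (Set.finite_range _).bddAbove
  have hle : ∀ i, hP.eigenvalues i ≤ lam := fun i => le_ciSup hbdd i
  set b := hP.eigenvectorBasis with hb
  have expand : ⟪Matrix.toEuclideanLin P v, v⟫ = ∑ i, hP.eigenvalues i * ⟪b i, v⟫ ^ 2 := by
    rw [← b.sum_inner_mul_inner (Matrix.toEuclideanLin P v) v]
    refine Finset.sum_congr rfl fun i _ => ?_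
    have h1 : ⟪Matrix.toEuclideanLin P v, b i⟫ = hP.eigenvalues i * ⟪b i, v⟫ := by
      rw [inner_eq_dot, inner_eq_dot]
      show (P *ᵥ (v : Fin n → ℝ)) ⬝ᵥ (b i : Fin n → ℝ) = _
      rw [dotProduct_comm, Matrix.dotProduct_mulVec, ← Matrix.mulVec_transpose, hPt,
        show P *ᵥ (b i : Fin n → ℝ) = hP.eigenvalues i • (b i : Fin n → ℝ) from
          hP.mulVec_eigenvectorBasis i, smul_dotProduct]
      simp [smul_eq_mul]
    rw [h1]; ring
  rw [expand]
  have bound : ∀ i ∈ Finset.univ, hP.eigenvalues i * ⟪b i, v⟫ ^ 2 ≤ lam * ⟪b i, v⟫ ^ 2 :=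
    fun i _ => mul_le_mul_of_nonneg_right (hle i) (sq_nonneg _)
  refine le_trans (Finset.sum_le_sum bound) ?_
  have : ∑ i, lam * ⟪b i, v⟫ ^ 2 = lam * ∑ i, ⟪v, b i⟫ * ⟪b i, v⟫ := by
    rw [Finset.mul_sum]
    refine Finset.sum_congr rfl fun i _ => ?_
    rw [real_inner_comm v (b i)]; ring
  rw [this, b.sum_inner_mul_inner v v, real_inner_self_eq_norm_sq]

lemma exists_polar (Y M : Matrix (Fin n) (Fin n) ℝ)
    (hM : M.IsHermitian) (hYM : M * M = Y * Yᵀ) :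
    ∃ W : Matrix (Fin n) (Fin n) ℝ, Wᵀ * W = 1 ∧ W * Wᵀ = 1 ∧ Y = M * W := by
  have hMt : Mᵀ = M := by
    have := hM; rwa [Matrix.IsHermitian, conjTranspose_eq_transpose_of_trivial] at this
  set V := EuclideanSpace ℝ (Fin n)
  let K : V →ₗ[ℝ] V := Matrix.toEuclideanLin M
  let Z : V →ₗ[ℝ] V := Matrix.toEuclideanLin Yᵀ
  have hK : ∀ x : V, (K x : Fin n → ℝ) = M *ᵥ (x : Fin n → ℝ) := fun _ => rfl
  have hZ : ∀ x : V, (Z x : Fin n → ℝ) = Yᵀ *ᵥ (x : Fin n → ℝ) := fun _ => rfl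
  have hnorm : ∀ x : V, ‖Z x‖ = ‖K x‖ := by
    intro x
    have h1 : ‖Z x‖ ^ 2 = ‖K x‖ ^ 2 := by
      rw [norm_sq_eq_dot, norm_sq_eq_dot, hK, hZ, mulVec_dot_mulVec, mulVec_dot_mulVec,
        transpose_transpose, hMt, hYM]
    have := congrArg Real.sqrt h1
    rwa [Real.sqrt_sq (norm_nonneg _), Real.sqrt_sq (norm_nonneg _)] at this
  have hker : LinearMap.ker K ≤ LinearMap.ker Z := by
    intro x hx
    rw [LinearMap.mem_ker] at hx ⊢
    have := hnorm x
    rw [hx, norm_zero] at this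
    exact norm_eq_zero.mp this
  let f0 : (V ⧸ LinearMap.ker K) →ₗ[ℝ] V := (LinearMap.ker K).liftQ Z hker
  let e := K.quotKerEquivRange
  let Lmap : LinearMap.range K →ₗ[ℝ] V := f0.comp e.symm.toLinearMap
  have hLmap : ∀ x : V, Lmap ⟨K x, LinearMap.mem_range_self K x⟩ = Z x := by
    intro x
    have he : (⟨K x, LinearMap.mem_range_self K x⟩ : LinearMap.range K)
        = e (Submodule.Quotient.mk x) := Subtype.ext (K.quotKerEquivRange_apply_mk x).symm
    have hsymm : e.symm ⟨K x, LinearMap.mem_range_self K x⟩ = Submodule.Quotient.mk x := by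
      rw [he, LinearEquiv.symm_apply_apply]
    simp only [Lmap, LinearMap.comp_apply, LinearEquiv.coe_toLinearMap, hsymm]
    exact Submodule.liftQ_apply _ Z x
  let L : LinearMap.range K →ₗᵢ[ℝ] V :=
    { toLinearMap := Lmap
      norm_map' := by
        rintro ⟨v, x, rfl⟩
        rw [hLmap x]
        simpa using hnorm x }
  let g := L.extend
  have hg : ∀ x : V, g (K x) = Z x := by
    intro x
    have := L.extend_apply ⟨K x, LinearMap.mem_range_self K x⟩
    exact this.trans (hLmap x)
  let G : Matrix (Fin n) (Fin n) ℝ := Matrix.toEuclideanLin.symm g.toLinearMap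
  have hGlin : Matrix.toEuclideanLin G = g.toLinearMap := Matrix.toEuclideanLin.apply_symm_apply _
  have hGv : ∀ x : V, (G *ᵥ (x : Fin n → ℝ) : Fin n → ℝ) = g x := by
    intro x
    have : Matrix.toEuclideanLin G x = g x := by rw [hGlin]; rfl
    exact congrArg WithLp.ofLp this
  have hGM : G * M = Yᵀ := by
    apply Matrix.toEuclideanLin.injective
    apply LinearMap.ext
    intro x
    show Matrix.toEuclideanLin (G * M) x = Z x
    have h1 : (Matrix.toEuclideanLin (G * M) x : Fin n → ℝ) = G *ᵥ (M *ᵥ x) := by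
      show (G * M) *ᵥ (x : Fin n → ℝ) = _
      rw [← Matrix.mulVec_mulVec]
    have h2 : (G *ᵥ (M *ᵥ (x : Fin n → ℝ)) : Fin n → ℝ) = g (K x) := hGv (K x)
    have : (Matrix.toEuclideanLin (G * M) x : Fin n → ℝ) = (Z x : Fin n → ℝ) := by
      rw [h1, h2, hg]
    exact WithLp.ofLp_injective 2 this
  have hGtG : Gᵀ * G = 1 := by
    have key : ∀ x y : Fin n → ℝ, x ⬝ᵥ ((Gᵀ * G) *ᵥ y) = x ⬝ᵥ y := by
      intro x y
      rw [← mulVec_dot_mulVec]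
      have hx : (G *ᵥ x : Fin n → ℝ) = g ((WithLp.equiv 2 (Fin n → ℝ)).symm x) := hGv _
      have hy : (G *ᵥ y : Fin n → ℝ) = g ((WithLp.equiv 2 (Fin n → ℝ)).symm y) := hGv _
      rw [hx, hy]
      have := g.inner_map_map ((WithLp.equiv 2 (Fin n → ℝ)).symm x)
        ((WithLp.equiv 2 (Fin n → ℝ)).symm y)
      rw [inner_eq_dot, inner_eq_dot] at this
      exact this
    ext i j
    have := key (Pi.single i 1) (Pi.single j 1)
    simp only [single_dotProduct, Matrix.mulVec_single_one, Matrix.col_apply, mul_one, one_mul] at this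
    rw [Matrix.one_apply, this]
    simp [Pi.single_apply]
  refine ⟨Gᵀ, ?_, ?_, ?_⟩
  · rw [transpose_transpose]
    exact mul_eq_one_comm.mp hGtG
  · rw [transpose_transpose, hGtG]
  · have : Y = (G * M)ᵀ := by rw [hGM, transpose_transpose]
    rw [this, Matrix.transpose_mul, hMt]

lemma frob_trace_eq (X : Matrix (Fin n) (Fin n) ℝ) :
    (Xᵀ * X).trace = ∑ i, ∑ j, X i j ^ 2 := by
  simp only [Matrix.trace, Matrix.diag, Matrix.mul_apply, Matrix.transpose_apply, sq]
  exact Finset.sum_comm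

lemma frob_trace_nonneg (X : Matrix (Fin n) (Fin n) ℝ) : 0 ≤ (Xᵀ * X).trace := by
  rw [frob_trace_eq]
  exact Finset.sum_nonneg fun i _ => Finset.sum_nonneg fun j _ => sq_nonneg _

lemma frobNorm_eq (X : Matrix (Fin n) (Fin n) ℝ) : frobNorm X = ‖X‖ := by
  rw [frobNorm, frob_trace_eq, Matrix.frobenius_norm_def, Real.sqrt_eq_rpow]
  congr 1
  refine Finset.sum_congr rfl fun i _ => Finset.sum_congr rfl fun j _ => ?_
  rw [Real.rpow_two, Real.norm_eq_abs, sq_abs]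

lemma norm_sq_eq_sum (X : Matrix (Fin n) (Fin n) ℝ) :
    ‖X‖ ^ 2 = ∑ i, ∑ j, X i j ^ 2 := by
  rw [← frobNorm_eq, frobNorm, Real.sq_sqrt (frob_trace_nonneg X), frob_trace_eq]

lemma mulVec_norm_le (X : Matrix (Fin n) (Fin n) ℝ) (v : EuclideanSpace ℝ (Fin n)) :
    ‖Matrix.toEuclideanLin X v‖ ≤ ‖X‖ * ‖v‖ := by
  refine le_of_sq_le_sq ?_ (mul_nonneg (norm_nonneg _) (norm_nonneg _))
  rw [mul_pow, norm_sq_eq_sum, norm_sq_eq_dot]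
  rw [norm_sq_eq_dot]
  show (X *ᵥ (v : Fin n → ℝ)) ⬝ᵥ (X *ᵥ (v : Fin n → ℝ)) ≤ _
  have expand : (X *ᵥ (v : Fin n → ℝ)) ⬝ᵥ (X *ᵥ (v : Fin n → ℝ))
      = ∑ i, (∑ j, X i j * v j) ^ 2 := by
    simp [dotProduct, Matrix.mulVec, sq]
  rw [expand, Finset.sum_mul]
  refine Finset.sum_le_sum fun i _ => ?_
  have := Finset.sum_mul_sq_le_sq_mul_sq Finset.univ (fun j => X i j) (fun j => (v : Fin n → ℝ) j)
  calc (∑ j, X i j * v j) ^ 2 ≤ (∑ j, X i j ^ 2) * (∑ j, (v : Fin n → ℝ) j ^ 2) := this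
    _ = (∑ j, X i j ^ 2) * ((v : Fin n → ℝ) ⬝ᵥ (v : Fin n → ℝ)) := by
        congr 1; simp [dotProduct, sq]

end StmtAux

namespace StmtAux

attribute [local instance] Matrix.frobeniusNormedAddCommGroup Matrix.frobeniusNormedSpace

lemma te_mul (X Y : Matrix (Fin n) (Fin n) ℝ) (v : EuclideanSpace ℝ (Fin n)) :
    Matrix.toEuclideanLin (X * Y) v = Matrix.toEuclideanLin X (Matrix.toEuclideanLin Y v) := by
  simp [Matrix.toEuclideanLin_apply, Matrix.mulVec_mulVec]

lemma main {n : ℕ} (ε : ℝ) (hε : 0 ≤ ε) (S Shat : Matrix (Fin n) (Fin n) ℝ)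
    (hS : S.PosSemidef) (hShat : Shat.PosSemidef)
    (hM : (hShat.sqrt * S * hShat.sqrt).PosSemidef)
    (hG : Real.sqrt ((S + Shat - (2 : ℝ) • hM.sqrt).trace) ≤ ε) :
    frobNorm S
      ≤ (2 * Real.sqrt (⨆ i, hShat.isHermitian.eigenvalues i) + ε) * ε + frobNorm Shat := by
  classical
  set A := hS.sqrt with hA
  set B := hShat.sqrt with hB
  set M := hM.sqrt with hMdef
  have hAs : A * A = S := hS.sqrt_mul_self
  have hBs : B * B = Shat := hShat.sqrt_mul_self
  have hMs : M * M = B * S * B := hM.sqrt_mul_self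
  have herm : ∀ (X : Matrix (Fin n) (Fin n) ℝ), X.IsHermitian → Xᵀ = X := fun X hX => by
    rwa [Matrix.IsHermitian, conjTranspose_eq_transpose_of_trivial] at hX
  have hAt : Aᵀ = A := herm _ hS.posSemidef_sqrt.1
  have hBt : Bᵀ = B := herm _ hShat.posSemidef_sqrt.1
  have hMt : Mᵀ = M := herm _ hM.posSemidef_sqrt.1
  have hYY : M * M = (B * A) * (B * A)ᵀ := by
    rw [hMs, ← hAs, Matrix.transpose_mul, hAt, hBt]
    noncomm_ring
  obtain ⟨W, hWtW, hWWt, hY⟩ := exists_polar (B * A) M hM.posSemidef_sqrt.1 hYY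
  have hAB : A * B = Wᵀ * M := by
    have h := congrArg Matrix.transpose hY
    rwa [Matrix.transpose_mul, Matrix.transpose_mul, hAt, hBt, hMt] at h
  set D := A - B * W with hD
  set C := A + B * W with hC
  have hDt : Dᵀ = A - Wᵀ * B := by rw [hD, Matrix.transpose_sub, Matrix.transpose_mul, hAt, hBt]
  have hCt : Cᵀ = A + Wᵀ * B := by rw [hC, Matrix.transpose_add, Matrix.transpose_mul, hAt, hBt]
  -- trace identity
  have htrDD : (Dᵀ * D).trace = (S + Shat - (2 : ℝ) • M).trace := by
    have e1 : Dᵀ * D = A * A - ((A * B) * W + Wᵀ * (B * A)) + Wᵀ * ((B * B) * W) := by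
      rw [hDt, hD]; noncomm_ring
    rw [e1, hAs, hBs, hAB, hY]
    have t1 : (Wᵀ * M * W).trace = M.trace := by
      rw [Matrix.trace_mul_comm (Wᵀ * M) W, ← Matrix.mul_assoc, hWWt, Matrix.one_mul]
    have t2 : (Wᵀ * (M * W)).trace = M.trace := by
      rw [Matrix.trace_mul_comm Wᵀ (M * W), Matrix.mul_assoc, hWWt, Matrix.mul_one]
    have t3 : (Wᵀ * (Shat * W)).trace = Shat.trace := by
      rw [Matrix.trace_mul_comm Wᵀ (Shat * W), Matrix.mul_assoc, hWWt, Matrix.mul_one]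
    simp only [Matrix.trace_sub, Matrix.trace_add, Matrix.trace_smul, t1, t2, t3, smul_eq_mul]
    ring
  have hD_le : ‖D‖ ≤ ε := by
    have h0 : frobNorm D ≤ ε := by rw [frobNorm, htrDD]; exact hG
    rwa [frobNorm_eq] at h0
  set lam := ⨆ i, hShat.isHermitian.eigenvalues i with hlamdef
  have hlam0 : 0 ≤ lam := by
    rcases isEmpty_or_nonempty (Fin n) with h | h
    · rw [hlamdef, Real.iSup_of_isEmpty]
    · obtain ⟨i⟩ := h
      exact le_trans (hShat.eigenvalues_nonneg i)
        (le_ciSup ((Set.finite_range _).bddAbove) i)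
  set t := Real.sqrt lam with ht
  have ht0 : 0 ≤ t := Real.sqrt_nonneg _
  have hk0 : 0 ≤ 2 * t + ε := by linarith
  have hBv : ∀ v : EuclideanSpace ℝ (Fin n), ‖Matrix.toEuclideanLin B v‖ ≤ t * ‖v‖ := by
    intro v
    refine le_of_sq_le_sq ?_ (mul_nonneg ht0 (norm_nonneg _))
    rw [mul_pow, ht, Real.sq_sqrt hlam0, norm_sq_eq_dot]
    show (B *ᵥ (v : Fin n → ℝ)) ⬝ᵥ (B *ᵥ (v : Fin n → ℝ)) ≤ _
    rw [mulVec_dot_mulVec, hBt, hBs, dotProduct_comm]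
    have h := quad_le Shat hShat.isHermitian v
    rw [inner_eq_dot] at h
    exact h
  have hWv : ∀ v : EuclideanSpace ℝ (Fin n), ‖Matrix.toEuclideanLin W v‖ = ‖v‖ := by
    intro v
    have h2 : ‖Matrix.toEuclideanLin W v‖ ^ 2 = ‖v‖ ^ 2 := by
      rw [norm_sq_eq_dot, norm_sq_eq_dot]
      show (W *ᵥ (v : Fin n → ℝ)) ⬝ᵥ (W *ᵥ (v : Fin n → ℝ)) = _
      rw [mulVec_dot_mulVec, hWtW, Matrix.one_mulVec]
    have := congrArg Real.sqrt h2
    rwa [Real.sqrt_sq (norm_nonneg _), Real.sqrt_sq (norm_nonneg _)] at this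
  have hDv : ∀ v : EuclideanSpace ℝ (Fin n), ‖Matrix.toEuclideanLin D v‖ ≤ ε * ‖v‖ := by
    intro v
    refine le_trans (mulVec_norm_le D v) ?_
    exact mul_le_mul_of_nonneg_right hD_le (norm_nonneg _)
  have hCv : ∀ v : EuclideanSpace ℝ (Fin n),
      ‖Matrix.toEuclideanLin C v‖ ≤ (2 * t + ε) * ‖v‖ := by
    intro v
    have hCsplit : Matrix.toEuclideanLin C v
        = Matrix.toEuclideanLin A v + Matrix.toEuclideanLin B (Matrix.toEuclideanLin W v) := by
      rw [hC, map_add, LinearMap.add_apply, ← te_mul]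
    have hAsplit : Matrix.toEuclideanLin A v
        = Matrix.toEuclideanLin D v + Matrix.toEuclideanLin B (Matrix.toEuclideanLin W v) := by
      have : A = D + B * W := by rw [hD]; abel
      rw [this, map_add, LinearMap.add_apply, ← te_mul]
    have hBW : ‖Matrix.toEuclideanLin B (Matrix.toEuclideanLin W v)‖ ≤ t * ‖v‖ := by
      refine le_trans (hBv _) ?_
      rw [hWv v]
    calc ‖Matrix.toEuclideanLin C v‖
        ≤ ‖Matrix.toEuclideanLin A v‖ + ‖Matrix.toEuclideanLin B (Matrix.toEuclideanLin W v)‖ := by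
          rw [hCsplit]; exact norm_add_le _ _
      _ ≤ (‖Matrix.toEuclideanLin D v‖ + ‖Matrix.toEuclideanLin B (Matrix.toEuclideanLin W v)‖)
            + ‖Matrix.toEuclideanLin B (Matrix.toEuclideanLin W v)‖ := by
          have := norm_add_le (Matrix.toEuclideanLin D v)
            (Matrix.toEuclideanLin B (Matrix.toEuclideanLin W v))
          rw [← hAsplit] at this
          linarith
      _ ≤ (ε * ‖v‖ + t * ‖v‖) + t * ‖v‖ := by linarith [hDv v, hBW]
      _ = (2 * t + ε) * ‖v‖ := by ring
  -- Frobenius × operator bound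
  have hDC : ‖D * Cᵀ‖ ≤ (2 * t + ε) * ‖D‖ := by
    refine le_of_sq_le_sq ?_ (mul_nonneg hk0 (norm_nonneg _))
    rw [norm_sq_eq_sum, mul_pow, norm_sq_eq_sum]
    have hrow : ∀ i, ∑ j, (D * Cᵀ) i j ^ 2
        = ‖Matrix.toEuclideanLin C ((WithLp.equiv 2 (Fin n → ℝ)).symm (D i))‖ ^ 2 := by
      intro i
      rw [norm_sq_eq_dot]
      show _ = (C *ᵥ (D i)) ⬝ᵥ (C *ᵥ (D i))
      simp [Matrix.mul_apply, Matrix.mulVec, Matrix.transpose_apply, dotProduct, sq, mul_comm]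
    have hrownorm : ∀ i, ‖((WithLp.equiv 2 (Fin n → ℝ)).symm (D i) : EuclideanSpace ℝ (Fin n))‖ ^ 2
        = ∑ j, D i j ^ 2 := by
      intro i
      rw [norm_sq_eq_dot]
      simp [dotProduct, sq]
    calc ∑ i, ∑ j, (D * Cᵀ) i j ^ 2
        = ∑ i, ‖Matrix.toEuclideanLin C ((WithLp.equiv 2 (Fin n → ℝ)).symm (D i))‖ ^ 2 := by
          exact Finset.sum_congr rfl fun i _ => hrow i
      _ ≤ ∑ i, ((2 * t + ε) * ‖((WithLp.equiv 2 (Fin n → ℝ)).symm (D i)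
            : EuclideanSpace ℝ (Fin n))‖) ^ 2 :=
          Finset.sum_le_sum fun i _ => pow_le_pow_left₀ (norm_nonneg _) (hCv _) 2
      _ = (2 * t + ε) ^ 2 * ∑ i, ∑ j, D i j ^ 2 := by
          rw [Finset.mul_sum]
          exact Finset.sum_congr rfl fun i _ => by rw [mul_pow, hrownorm i]
  have hDCle : ‖D * Cᵀ‖ ≤ (2 * t + ε) * ε :=
    le_trans hDC (mul_le_mul_of_nonneg_left hD_le hk0)
  -- decomposition
  have hBWWB : (B * W) * (Wᵀ * B) = Shat := by
    have h : (B * W) * (Wᵀ * B) = B * (W * Wᵀ) * B := by noncomm_ring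
    rw [h, hWWt, Matrix.mul_one, hBs]
  have hkey : D * Cᵀ + C * Dᵀ = (S - Shat) + (S - Shat) := by
    have genid : ∀ a b c d : Matrix (Fin n) (Fin n) ℝ,
        (a - b) * (c + d) + (a + b) * (c - d) = (a * c + a * c) - (b * d + b * d) := by
      intros a b c d; noncomm_ring
    rw [hD, hC, hCt, hDt, genid A (B * W) A (Wᵀ * B), hAs, hBWWB]
    abel
  have hSdiff : ‖S - Shat‖ ≤ (2 * t + ε) * ε := by
    have h2 : ‖(S - Shat) + (S - Shat)‖ = 2 * ‖S - Shat‖ := by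
      rw [← two_smul ℝ (S - Shat), norm_smul]
      simp
    have hCD : C * Dᵀ = (D * Cᵀ)ᵀ := by
      rw [Matrix.transpose_mul, Matrix.transpose_transpose]
    have h3 : ‖D * Cᵀ + C * Dᵀ‖ ≤ 2 * ((2 * t + ε) * ε) := by
      calc ‖D * Cᵀ + C * Dᵀ‖ ≤ ‖D * Cᵀ‖ + ‖C * Dᵀ‖ := norm_add_le _ _
        _ = ‖D * Cᵀ‖ + ‖D * Cᵀ‖ := by rw [hCD, Matrix.frobenius_norm_transpose]
        _ ≤ 2 * ((2 * t + ε) * ε) := by linarith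
    rw [hkey, h2] at h3
    linarith
  rw [frobNorm_eq, frobNorm_eq]
  have final : ‖S‖ ≤ ‖S - Shat‖ + ‖Shat‖ := by
    calc ‖S‖ = ‖(S - Shat) + Shat‖ := by rw [sub_add_cancel]
      _ ≤ ‖S - Shat‖ + ‖Shat‖ := norm_add_le _ _
  linarith

end StmtAux


theorem stmt_10 {n : ℕ} (ε : ℝ) (hε : 0 ≤ ε) (S Shat : Matrix (Fin n) (Fin n) ℝ)
    (hS : S.PosSemidef) (hShat : Shat.PosSemidef)
    (hM : (hShat.sqrt * S * hShat.sqrt).PosSemidef)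
    (hG : Real.sqrt ((S + Shat - (2 : ℝ) • hM.sqrt).trace) ≤ ε) :
    frobNorm S
      ≤ (2 * Real.sqrt (⨆ i, hShat.isHermitian.eigenvalues i) + ε) * ε + frobNorm Shat :=
  StmtAux.main ε hε S Shat hS hShat hM hG
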